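/- (Affine state extension) Let S be a frame stack and e an expression such that every observation symbol occurring in S or e is affine. Then for every state s with atom(S) ∪ atom(e) ⊆ atom(s), every atom a' ∉ atom(s) and every n, ⟨a'⊕s, S, e⟩↓ⁿ if and only if ⟨s, S, e⟩↓ⁿ. -/

import Mathlib

set_option autoImplicit true

/-! ## Atoms and variables -/

abbrev Atom : Type := ℕ

/-! ## Types over a set of data type symbols -/

inductive Ty (D : Type) : Type where
  | unit : Ty D
  | prod : Ty D → Ty D → Ty D
  | arrow : Ty D → Ty D → Ty D
  | data : D → Ty D
  | atm : Ty D
  | bnd : Ty D → Ty D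

/-! ## Signatures: data types, constructors and observations -/

structure Sig : Type 1 where
  D : Type
  C : Type
  O : Type
  [finD : Fintype D]
  [finC : Fintype C]
  [finO : Fintype O]
  natD : D
  argTy : C → Ty D
  resTy : C → D
  zeroC : C
  succC : C
  zeroArg : argTy zeroC = Ty.unit
  zeroRes : resTy zeroC = natD
  succArg : argTy succC = Ty.data natD
  succRes : resTy succC = natD
  arity : O → ℕ
  obsVal : O → List Atom → List Atom → ℕ
  eqO : O
  eqArity : arity eqO = 2
  eqSem : ∀ (s : List Atom) (a b : Atom),
    obsVal eqO s [a, b] = if a = b then 0 else 1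

attribute [instance] Sig.finD Sig.finC Sig.finO

/-! ## Terms (de Bruijn representation; values are a sub-grammar cut out by `IsVal`) -/

inductive Tm (σ : Sig) : Type where
  | var : ℕ → Tm σ
  | unit : Tm σ
  | pair : Tm σ → Tm σ → Tm σ
  | fn : Tm σ → Tm σ          -- fun(f x = e); de Bruijn: var 0 = x, var 1 = f
  | con : σ.C → Tm σ → Tm σ
  | atom : Atom → Tm σ
  | bindv : Tm σ → Tm σ → Tm σ -- atom binding ⟨⟨v₁⟩⟩v₂
  | lett : Tm σ → Tm σ → Tm σ  -- let x = e₁ in e₂; binds var 0 in e₂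
  | fst : Tm σ → Tm σ
  | snd : Tm σ → Tm σ
  | app : Tm σ → Tm σ → Tm σ
  | case : Tm σ → (σ.C → Tm σ) → Tm σ -- match; each branch binds var 0
  | fresh : Tm σ
  | unbind : Tm σ → Tm σ
  | obs : (o : σ.O) → (Fin (σ.arity o) → Tm σ) → Tm σ

inductive IsVal {σ : Sig} : Tm σ → Prop where
  | var : IsVal (Tm.var n)
  | unit : IsVal Tm.unit
  | pair : IsVal v₁ → IsVal v₂ → IsVal (Tm.pair v₁ v₂)
  | fn : IsVal (Tm.fn e)
  | con : IsVal v → IsVal (Tm.con c v)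
  | atom : IsVal (Tm.atom a)
  | bindv : IsVal v₁ → IsVal v₂ → IsVal (Tm.bindv v₁ v₂)

/-! ## Renaming and substitution of variables -/

def upr (r : ℕ → ℕ) : ℕ → ℕ
  | 0 => 0
  | n + 1 => r n + 1

namespace Tm

variable {σ : Sig}

def renV : Tm σ → (ℕ → ℕ) → Tm σ
  | .var n, r => .var (r n)
  | .unit, _ => .unit
  | .pair t₁ t₂, r => .pair (renV t₁ r) (renV t₂ r)
  | .fn e, r => .fn (renV e (upr (upr r)))
  | .con c t, r => .con c (renV t r)
  | .atom a, _ => .atom a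
  | .bindv t₁ t₂, r => .bindv (renV t₁ r) (renV t₂ r)
  | .lett e₁ e₂, r => .lett (renV e₁ r) (renV e₂ (upr r))
  | .fst t, r => .fst (renV t r)
  | .snd t, r => .snd (renV t r)
  | .app t₁ t₂, r => .app (renV t₁ r) (renV t₂ r)
  | .case t br, r => .case (renV t r) (fun c => renV (br c) (upr r))
  | .fresh, _ => .fresh
  | .unbind t, r => .unbind (renV t r)
  | .obs o args, r => .obs o (fun i => renV (args i) r)

def ups (ρ : ℕ → Tm σ) : ℕ → Tm σ
  | 0 => .var 0
  | n + 1 => renV (ρ n) Nat.succ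

def subst : Tm σ → (ℕ → Tm σ) → Tm σ
  | .var n, ρ => ρ n
  | .unit, _ => .unit
  | .pair t₁ t₂, ρ => .pair (subst t₁ ρ) (subst t₂ ρ)
  | .fn e, ρ => .fn (subst e (ups (ups ρ)))
  | .con c t, ρ => .con c (subst t ρ)
  | .atom a, _ => .atom a
  | .bindv t₁ t₂, ρ => .bindv (subst t₁ ρ) (subst t₂ ρ)
  | .lett e₁ e₂, ρ => .lett (subst e₁ ρ) (subst e₂ (ups ρ))
  | .fst t, ρ => .fst (subst t ρ)
  | .snd t, ρ => .snd (subst t ρ)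
  | .app t₁ t₂, ρ => .app (subst t₁ ρ) (subst t₂ ρ)
  | .case t br, ρ => .case (subst t ρ) (fun c => subst (br c) (ups ρ))
  | .fresh, _ => .fresh
  | .unbind t, ρ => .unbind (subst t ρ)
  | .obs o args, ρ => .obs o (fun i => subst (args i) ρ)

/-- The substitution [v/x₀]. -/
def cons1 (v : Tm σ) : ℕ → Tm σ
  | 0 => v
  | n + 1 => .var n

/-- The substitution [v/x₀, f/x₁]. -/
def cons2 (v f : Tm σ) : ℕ → Tm σ
  | 0 => v
  | 1 => f
  | n + 2 => .var n

/-- e[v/x] (single capture-avoiding substitution for the last-bound variable). -/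
def subst1 (e v : Tm σ) : Tm σ := subst e (cons1 v)

/-- e[v/x, f/f'] (used for function application). -/
def subst2 (e v f : Tm σ) : Tm σ := subst e (cons2 v f)

/-! ## Atoms of a term, renaming/permuting atoms, observation symbols -/

def atoms : Tm σ → Finset Atom
  | .var _ => ∅
  | .unit => ∅
  | .pair t₁ t₂ => atoms t₁ ∪ atoms t₂
  | .fn e => atoms e
  | .con _ t => atoms t
  | .atom a => {a}
  | .bindv t₁ t₂ => atoms t₁ ∪ atoms t₂
  | .lett e₁ e₂ => atoms e₁ ∪ atoms e₂
  | .fst t => atoms t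
  | .snd t => atoms t
  | .app t₁ t₂ => atoms t₁ ∪ atoms t₂
  | .case t br => atoms t ∪ Finset.univ.biUnion (fun c => atoms (br c))
  | .fresh => ∅
  | .unbind t => atoms t
  | .obs _ args => Finset.univ.biUnion (fun i => atoms (args i))

def mapAtoms : Tm σ → (Atom → Atom) → Tm σ
  | .var n, _ => .var n
  | .unit, _ => .unit
  | .pair t₁ t₂, f => .pair (mapAtoms t₁ f) (mapAtoms t₂ f)
  | .fn e, f => .fn (mapAtoms e f)
  | .con c t, f => .con c (mapAtoms t f)
  | .atom a, f => .atom (f a)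
  | .bindv t₁ t₂, f => .bindv (mapAtoms t₁ f) (mapAtoms t₂ f)
  | .lett e₁ e₂, f => .lett (mapAtoms e₁ f) (mapAtoms e₂ f)
  | .fst t, f => .fst (mapAtoms t f)
  | .snd t, f => .snd (mapAtoms t f)
  | .app t₁ t₂, f => .app (mapAtoms t₁ f) (mapAtoms t₂ f)
  | .case t br, f => .case (mapAtoms t f) (fun c => mapAtoms (br c) f)
  | .fresh, _ => .fresh
  | .unbind t, f => .unbind (mapAtoms t f)
  | .obs o args, f => .obs o (fun i => mapAtoms (args i) f)

/-- v[a := a'] : rename all occurrences of atom a to a'. -/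
def renameAtom (t : Tm σ) (a a' : Atom) : Tm σ :=
  t.mapAtoms (fun b => if b = a then a' else b)

def obsSyms : Tm σ → Set σ.O
  | .var _ => ∅
  | .unit => ∅
  | .pair t₁ t₂ => obsSyms t₁ ∪ obsSyms t₂
  | .fn e => obsSyms e
  | .con _ t => obsSyms t
  | .atom _ => ∅
  | .bindv t₁ t₂ => obsSyms t₁ ∪ obsSyms t₂
  | .lett e₁ e₂ => obsSyms e₁ ∪ obsSyms e₂
  | .fst t => obsSyms t
  | .snd t => obsSyms t
  | .app t₁ t₂ => obsSyms t₁ ∪ obsSyms t₂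
  | .case t br => obsSyms t ∪ ⋃ c, obsSyms (br c)
  | .fresh => ∅
  | .unbind t => obsSyms t
  | .obs o args => insert o (⋃ i, obsSyms (args i))

end Tm

/-! ## Frame stacks -/

inductive Stk (σ : Sig) : Type where
  | id : Stk σ
  | cons : Stk σ → Tm σ → Stk σ  -- S∘(x.e); e binds var 0

namespace Stk

variable {σ : Sig}

def atoms : Stk σ → Finset Atom
  | .id => ∅
  | .cons S e => atoms S ∪ e.atoms

def obsSyms : Stk σ → Set σ.O
  | .id => ∅
  | .cons S e => obsSyms S ∪ e.obsSyms

def mapAtoms : Stk σ → (Atom → Atom) → Stk σ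
  | .id, _ => .id
  | .cons S e, f => .cons (mapAtoms S f) (e.mapAtoms f)

/-- S[e]: Id[e] = e, (S∘(x.e'))[e] = S[let x = e in e']. -/
def fill : Stk σ → Tm σ → Tm σ
  | .id, e => e
  | .cons S e', e => fill S (Tm.lett e e')

end Stk

/-! ## Numerals -/

def numeral (σ : Sig) : ℕ → Tm σ
  | 0 => Tm.con σ.zeroC Tm.unit
  | n + 1 => Tm.con σ.succC (numeral σ n)

/-! ## Configurations -/

structure Config (σ : Sig) : Type where
  st : List Atom
  stk : Stk σ
  tm : Tm σ

/-! ## Typing -/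

inductive HasTy (σ : Sig) : List (Ty σ.D) → Tm σ → Ty σ.D → Prop where
  | var (Γ : List (Ty σ.D)) (n : ℕ) (τ : Ty σ.D) :
      Γ[n]? = some τ → HasTy σ Γ (Tm.var n) τ
  | unit : HasTy σ Γ Tm.unit Ty.unit
  | pair : IsVal v₁ → IsVal v₂ → HasTy σ Γ v₁ τ₁ → HasTy σ Γ v₂ τ₂ →
      HasTy σ Γ (Tm.pair v₁ v₂) (Ty.prod τ₁ τ₂)
  | fn : HasTy σ (τ :: Ty.arrow τ τ' :: Γ) e τ' →
      HasTy σ Γ (Tm.fn e) (Ty.arrow τ τ')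
  | con : IsVal v → HasTy σ Γ v (σ.argTy c) →
      HasTy σ Γ (Tm.con c v) (Ty.data (σ.resTy c))
  | atom : HasTy σ Γ (Tm.atom a) Ty.atm
  | bindv : IsVal v₁ → IsVal v₂ → HasTy σ Γ v₁ Ty.atm → HasTy σ Γ v₂ τ →
      HasTy σ Γ (Tm.bindv v₁ v₂) (Ty.bnd τ)
  | lett : HasTy σ Γ e₁ τ → HasTy σ (τ :: Γ) e₂ τ' →
      HasTy σ Γ (Tm.lett e₁ e₂) τ'
  | fst : IsVal v → HasTy σ Γ v (Ty.prod τ₁ τ₂) → HasTy σ Γ (Tm.fst v) τ₁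
  | snd : IsVal v → HasTy σ Γ v (Ty.prod τ₁ τ₂) → HasTy σ Γ (Tm.snd v) τ₂
  | app : IsVal v₁ → IsVal v₂ → HasTy σ Γ v₁ (Ty.arrow τ τ') → HasTy σ Γ v₂ τ →
      HasTy σ Γ (Tm.app v₁ v₂) τ'
  | case (br : σ.C → Tm σ) : IsVal v → HasTy σ Γ v (Ty.data δ) →
      (∀ c, σ.resTy c = δ → HasTy σ (σ.argTy c :: Γ) (br c) τ) →
      HasTy σ Γ (Tm.case v br) τ
  | fresh : HasTy σ Γ Tm.fresh Ty.atm
  | unbind : IsVal v → HasTy σ Γ v (Ty.bnd τ) →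
      HasTy σ Γ (Tm.unbind v) (Ty.prod Ty.atm τ)
  | obs (o : σ.O) (args : Fin (σ.arity o) → Tm σ) :
      (∀ i, IsVal (args i)) → (∀ i, HasTy σ Γ (args i) Ty.atm) →
      HasTy σ Γ (Tm.obs o args) (Ty.data σ.natD)

inductive HasTyStk (σ : Sig) : List (Ty σ.D) → Stk σ → Ty σ.D → Ty σ.D → Prop where
  | id : HasTyStk σ Γ Stk.id τ τ
  | cons : HasTy σ (τ :: Γ) e τ' → HasTyStk σ Γ S τ' τ'' →
      HasTyStk σ Γ (Stk.cons S e) τ τ''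

/-! ## The transition relation -/

inductive Step (σ : Sig) : Config σ → Config σ → Prop where
  | pop : IsVal v →
      Step σ ⟨s, Stk.cons S e, v⟩ ⟨s, S, e.subst1 v⟩
  | lett :
      Step σ ⟨s, S, Tm.lett e₁ e₂⟩ ⟨s, Stk.cons S e₂, e₁⟩
  | case (br : σ.C → Tm σ) : IsVal v →
      Step σ ⟨s, S, Tm.case (Tm.con c v) br⟩ ⟨s, S, (br c).subst1 v⟩
  | fst : IsVal v₁ → IsVal v₂ →
      Step σ ⟨s, S, Tm.fst (Tm.pair v₁ v₂)⟩ ⟨s, S, v₁⟩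
  | snd : IsVal v₁ → IsVal v₂ →
      Step σ ⟨s, S, Tm.snd (Tm.pair v₁ v₂)⟩ ⟨s, S, v₂⟩
  | app : IsVal v →
      Step σ ⟨s, S, Tm.app (Tm.fn e) v⟩ ⟨s, S, e.subst2 v (Tm.fn e)⟩
  | fresh : a' ∉ s →
      Step σ ⟨s, S, Tm.fresh⟩ ⟨s ++ [a'], S, Tm.atom a'⟩
  | unbind : a' ∉ s → IsVal v →
      Step σ ⟨s, S, Tm.unbind (Tm.bindv (Tm.atom a) v)⟩
             ⟨s ++ [a'], S, Tm.pair (Tm.atom a') (v.renameAtom a a')⟩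
  | obs (o : σ.O) (as : Fin (σ.arity o) → Atom) :
      (∀ i, as i ∈ s) →
      Step σ ⟨s, S, Tm.obs o (fun i => Tm.atom (as i))⟩
             ⟨s, S, numeral σ (σ.obsVal o s (List.ofFn as))⟩

/-! ## Termination -/

inductive TermN (σ : Sig) : Config σ → ℕ → Prop where
  | val : IsVal v → TermN σ ⟨s, Stk.id, v⟩ 0
  | step : Step σ c c' → TermN σ c' n → TermN σ c (n + 1)

def Term (σ : Sig) (c : Config σ) : Prop := ∃ n, TermN σ c n

/-! ## Equivariance and affineness of observations -/

def ObsEquivariant (σ : Sig) : Prop :=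
  ∀ (π : Equiv.Perm Atom), {a : Atom | π a ≠ a}.Finite →
    ∀ (o : σ.O) (s as : List Atom),
      s.Nodup → as.length = σ.arity o → (∀ a ∈ as, a ∈ s) →
      σ.obsVal o s as = σ.obsVal o (s.map ⇑π) (as.map ⇑π)

def AffineObs (σ : Sig) (o : σ.O) : Prop :=
  ∀ (s : List Atom) (a' : Atom) (as : List Atom),
    s.Nodup → a' ∉ s → as.length = σ.arity o → (∀ a ∈ as, a ∈ s) →
    σ.obsVal o (a' :: s) as = σ.obsVal o s as

/-! ## Operational equivalence of closed expressions, and contextual equivalence -/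

def OpEq (σ : Sig) (w : Finset Atom) (e e' : Tm σ) (τ : Ty σ.D) : Prop :=
  e.atoms ∪ e'.atoms ⊆ w ∧ HasTy σ [] e τ ∧ HasTy σ [] e' τ ∧
  ∀ (s : List Atom) (S : Stk σ) (τ' : Ty σ.D),
    s.Nodup → w ∪ S.atoms ⊆ s.toFinset → HasTyStk σ [] S τ τ' →
    (Term σ ⟨s, S, e⟩ ↔ Term σ ⟨s, S, e'⟩)

/-- A closing substitution for context Γ with atoms in w. -/
def ClosingSubst (σ : Sig) (Γ : List (Ty σ.D)) (w : Finset Atom) (vs : ℕ → Tm σ) : Prop :=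
  ∀ i τ, Γ[i]? = some τ → IsVal (vs i) ∧ HasTy σ [] (vs i) τ ∧ (vs i).atoms ⊆ w

def CtxEq (σ : Sig) (Γ : List (Ty σ.D)) (w : Finset Atom) (e e' : Tm σ) (τ : Ty σ.D) : Prop :=
  e.atoms ∪ e'.atoms ⊆ w ∧ HasTy σ Γ e τ ∧ HasTy σ Γ e' τ ∧
  ∀ (w' : Finset Atom) (vs : ℕ → Tm σ), w ⊆ w' → ClosingSubst σ Γ w' vs →
    OpEq σ w' (e.subst vs) (e'.subst vs) τ

/-! ## Expression relations -/

def ExprRel (σ : Sig) : Type :=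
  List (Ty σ.D) → Finset Atom → Tm σ → Tm σ → Ty σ.D → Prop

def IsExprRel (σ : Sig) (R : ExprRel σ) : Prop :=
  ∀ Γ w e e' τ, R Γ w e e' τ →
    e.atoms ∪ e'.atoms ⊆ w ∧ HasTy σ Γ e τ ∧ HasTy σ Γ e' τ

/-- Compatible refinement ℰ̂ of an expression relation ℰ. -/
inductive CompRef (σ : Sig) (R : ExprRel σ) :
    List (Ty σ.D) → Finset Atom → Tm σ → Tm σ → Ty σ.D → Prop where
  | var (Γ : List (Ty σ.D)) (n : ℕ) (τ : Ty σ.D) :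
      Γ[n]? = some τ → CompRef σ R Γ w (Tm.var n) (Tm.var n) τ
  | unit : CompRef σ R Γ w Tm.unit Tm.unit Ty.unit
  | pair : IsVal v₁ → IsVal v₂ → IsVal v₁' → IsVal v₂' →
      R Γ w v₁ v₁' τ₁ → R Γ w v₂ v₂' τ₂ →
      CompRef σ R Γ w (Tm.pair v₁ v₂) (Tm.pair v₁' v₂') (Ty.prod τ₁ τ₂)
  | fn : R (τ :: Ty.arrow τ τ' :: Γ) w e e' τ' →
      CompRef σ R Γ w (Tm.fn e) (Tm.fn e') (Ty.arrow τ τ')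
  | con : IsVal v → IsVal v' → R Γ w v v' (σ.argTy c) →
      CompRef σ R Γ w (Tm.con c v) (Tm.con c v') (Ty.data (σ.resTy c))
  | atom : a ∈ w → CompRef σ R Γ w (Tm.atom a) (Tm.atom a) Ty.atm
  | bindv : IsVal v₁ → IsVal v₂ → IsVal v₁' → IsVal v₂' →
      R Γ w v₁ v₁' Ty.atm → R Γ w v₂ v₂' τ →
      CompRef σ R Γ w (Tm.bindv v₁ v₂) (Tm.bindv v₁' v₂') (Ty.bnd τ)
  | lett : R Γ w e₁ e₁' τ → R (τ :: Γ) w e₂ e₂' τ' →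
      CompRef σ R Γ w (Tm.lett e₁ e₂) (Tm.lett e₁' e₂') τ'
  | fst : IsVal v → IsVal v' → R Γ w v v' (Ty.prod τ₁ τ₂) →
      CompRef σ R Γ w (Tm.fst v) (Tm.fst v') τ₁
  | snd : IsVal v → IsVal v' → R Γ w v v' (Ty.prod τ₁ τ₂) →
      CompRef σ R Γ w (Tm.snd v) (Tm.snd v') τ₂
  | app : IsVal v₁ → IsVal v₂ → IsVal v₁' → IsVal v₂' →
      R Γ w v₁ v₁' (Ty.arrow τ τ') → R Γ w v₂ v₂' τ →
      CompRef σ R Γ w (Tm.app v₁ v₂) (Tm.app v₁' v₂') τ'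
  | case (br br' : σ.C → Tm σ) : IsVal v → IsVal v' → R Γ w v v' (Ty.data δ) →
      (∀ c, σ.resTy c = δ → R (σ.argTy c :: Γ) w (br c) (br' c) τ) →
      CompRef σ R Γ w (Tm.case v br) (Tm.case v' br') τ
  | fresh : CompRef σ R Γ w Tm.fresh Tm.fresh Ty.atm
  | unbind : IsVal v → IsVal v' → R Γ w v v' (Ty.bnd τ) →
      CompRef σ R Γ w (Tm.unbind v) (Tm.unbind v') (Ty.prod Ty.atm τ)
  | obs (o : σ.O) (args args' : Fin (σ.arity o) → Tm σ) :
      (∀ i, IsVal (args i)) → (∀ i, IsVal (args' i)) →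
      (∀ i, R Γ w (args i) (args' i) Ty.atm) →
      CompRef σ R Γ w (Tm.obs o args) (Tm.obs o args') (Ty.data σ.natD)

/-- Compatible refinement extended to frame stacks. -/
inductive StkRef (σ : Sig) (R : ExprRel σ) :
    List (Ty σ.D) → Finset Atom → Stk σ → Stk σ → Ty σ.D → Ty σ.D → Prop where
  | id : StkRef σ R Γ w Stk.id Stk.id τ τ
  | cons : R (τ :: Γ) w e e' τ' → StkRef σ R Γ w S S' τ' τ'' →
      StkRef σ R Γ w (Stk.cons S e) (Stk.cons S' e') τ τ''

/-! ## Properties of expression relations -/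

def RelRefl (σ : Sig) (R : ExprRel σ) : Prop :=
  ∀ Γ w (e : Tm σ) τ, e.atoms ⊆ w → HasTy σ Γ e τ → R Γ w e e τ

def RelSymm (σ : Sig) (R : ExprRel σ) : Prop :=
  ∀ Γ w e e' τ, R Γ w e e' τ → R Γ w e' e τ

def RelTrans (σ : Sig) (R : ExprRel σ) : Prop :=
  ∀ Γ w e e' e'' τ, R Γ w e e' τ → R Γ w e' e'' τ → R Γ w e e'' τ

def RelCompat (σ : Sig) (R : ExprRel σ) : Prop :=
  ∀ Γ w e e' τ, CompRef σ R Γ w e e' τ → R Γ w e e' τ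

def RelSubst (σ : Sig) (R : ExprRel σ) : Prop :=
  ∀ Γ w (v v' : Tm σ) τ e e' τ', IsVal v → IsVal v' →
    R Γ w v v' τ → R (τ :: Γ) w e e' τ' →
    R Γ w (e.subst1 v) (e'.subst1 v') τ'

def RelEquivariant (σ : Sig) (R : ExprRel σ) : Prop :=
  ∀ (π : Equiv.Perm Atom), {a : Atom | π a ≠ a}.Finite →
    ∀ Γ w (e e' : Tm σ) τ, R Γ w e e' τ →
      R Γ (w.image ⇑π) (e.mapAtoms ⇑π) (e'.mapAtoms ⇑π) τ

def RelAdequate (σ : Sig) (R : ExprRel σ) : Prop :=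
  ∀ w e e' τ, R [] w e e' τ → OpEq σ w e e' τ

/-! ## The Howe relation (least relation closed under the Howe rule) -/

def Howe (σ : Sig) : ExprRel σ := fun Γ w e e'' τ =>
  ∀ R : ExprRel σ,
    (∀ Γ' w' a c τ',
      (∃ b, CompRef σ R Γ' w' a b τ' ∧ CtxEq σ Γ' w' b c τ') → R Γ' w' a c τ') →
    R Γ w e e'' τ

/-! ## Nominal arities and α-equivalence -/

inductive NominalArity (σ : Sig) : Ty σ.D → Prop where
  | unit : NominalArity σ Ty.unit
  | prod : NominalArity σ t₁ → NominalArity σ t₂ → NominalArity σ (Ty.prod t₁ t₂)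
  | data (d : σ.D) : NominalArity σ (Ty.data d)
  | atm : NominalArity σ Ty.atm
  | bnd : NominalArity σ t → NominalArity σ (Ty.bnd t)

inductive AlphaEq (σ : Sig) : Finset Atom → Tm σ → Tm σ → Ty σ.D → Prop where
  | unit : AlphaEq σ w Tm.unit Tm.unit Ty.unit
  | pair : AlphaEq σ w v₁ v₁' a₁ → AlphaEq σ w v₂ v₂' a₂ →
      AlphaEq σ w (Tm.pair v₁ v₂) (Tm.pair v₁' v₂') (Ty.prod a₁ a₂)
  | con : AlphaEq σ w v v' (σ.argTy c) →
      AlphaEq σ w (Tm.con c v) (Tm.con c v') (Ty.data (σ.resTy c))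
  | atom : a ∈ w → AlphaEq σ w (Tm.atom a) (Tm.atom a) Ty.atm
  | bindv (a a' a'' : Atom) (v v' : Tm σ) : a'' ∉ w →
      insert a (insert a' (v.atoms ∪ v'.atoms)) ⊆ w →
      AlphaEq σ (insert a'' w) (v.renameAtom a a'') (v'.renameAtom a' a'') ar →
      AlphaEq σ w (Tm.bindv (Tm.atom a) v) (Tm.bindv (Tm.atom a') v') (Ty.bnd ar)

/-! ## Well-typed configurations -/

def ConfigTy (σ : Sig) (w : Finset Atom) (c : Config σ) (τ : Ty σ.D) : Prop :=
  c.st.Nodup ∧ c.stk.atoms ∪ c.tm.atoms ⊆ c.st.toFinset ∧ c.st.toFinset = w ∧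
  ∃ τ', HasTyStk σ [] c.stk τ' τ ∧ HasTy σ [] c.tm τ'


/-! ## Auxiliary lemmas -/

namespace Tm

variable {σ : Sig}

theorem isVal_mapAtoms {t : Tm σ} (h : IsVal t) (f : Atom → Atom) :
    IsVal (t.mapAtoms f) := by
  induction h <;> simp only [mapAtoms] <;> constructor <;> assumption

theorem mapAtoms_renV (t : Tm σ) (r : ℕ → ℕ) (f : Atom → Atom) :
    (t.renV r).mapAtoms f = (t.mapAtoms f).renV r := by
  induction t generalizing r <;> simp [renV, mapAtoms, *]

theorem mapAtoms_ups (ρ : ℕ → Tm σ) (f : Atom → Atom) :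
    (fun n => (ups ρ n).mapAtoms f) = ups (fun n => (ρ n).mapAtoms f) := by
  funext n; cases n <;> simp [ups, mapAtoms, mapAtoms_renV]

theorem mapAtoms_subst (t : Tm σ) (ρ : ℕ → Tm σ) (f : Atom → Atom) :
    (t.subst ρ).mapAtoms f = (t.mapAtoms f).subst (fun n => (ρ n).mapAtoms f) := by
  induction t generalizing ρ <;> simp [subst, mapAtoms, mapAtoms_ups, *]

theorem mapAtoms_subst1 (e v : Tm σ) (f : Atom → Atom) :
    (e.subst1 v).mapAtoms f = (e.mapAtoms f).subst1 (v.mapAtoms f) := by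
  unfold subst1
  rw [mapAtoms_subst]
  congr 1
  funext n
  match n with
  | 0 => rfl
  | n+1 => rfl

theorem mapAtoms_subst2 (e v g : Tm σ) (f : Atom → Atom) :
    (e.subst2 v g).mapAtoms f = (e.mapAtoms f).subst2 (v.mapAtoms f) (g.mapAtoms f) := by
  unfold subst2
  rw [mapAtoms_subst]
  congr 1
  funext n
  match n with
  | 0 => rfl
  | 1 => rfl
  | n+2 => rfl

theorem mapAtoms_mapAtoms (t : Tm σ) (f g : Atom → Atom) :
    (t.mapAtoms f).mapAtoms g = t.mapAtoms (fun a => g (f a)) := by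
  induction t <;> simp [mapAtoms, *]

theorem mapAtoms_renameAtom (v : Tm σ) (a a' : Atom) {π : Atom → Atom}
    (hπ : Function.Injective π) :
    (v.renameAtom a a').mapAtoms π = (v.mapAtoms π).renameAtom (π a) (π a') := by
  unfold renameAtom
  rw [mapAtoms_mapAtoms, mapAtoms_mapAtoms]
  congr 1
  funext b
  by_cases hb : b = a
  · simp [hb]
  · rw [if_neg hb, if_neg (fun h => hb (hπ h))]

theorem atoms_mapAtoms (t : Tm σ) (f : Atom → Atom) :
    (t.mapAtoms f).atoms = t.atoms.image f := by
  induction t <;> simp [mapAtoms, atoms, Finset.image_union, Finset.biUnion_image, *]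

theorem obsSyms_mapAtoms (t : Tm σ) (f : Atom → Atom) :
    (t.mapAtoms f).obsSyms = t.obsSyms := by
  induction t <;> simp [mapAtoms, obsSyms, *]

theorem mapAtoms_eq_self {f : Atom → Atom} :
    ∀ {t : Tm σ}, (∀ a ∈ t.atoms, f a = a) → t.mapAtoms f = t := by
  intro t
  induction t <;> intro h <;>
    simp only [atoms, Finset.mem_union, Finset.mem_singleton, Finset.mem_biUnion,
      Finset.mem_univ, true_and, Finset.notMem_empty] at h <;>
    simp only [mapAtoms] <;> first
      | rfl
      | (congr 1 <;> first
          | (apply_assumption; rfl)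
          | (apply_assumption; intros; apply_assumption; tauto)
          | (funext c; apply_assumption; intros; apply_assumption; tauto))

theorem atoms_renV (t : Tm σ) (r : ℕ → ℕ) : (t.renV r).atoms = t.atoms := by
  induction t generalizing r <;> simp [renV, atoms, *]

theorem obsSyms_renV (t : Tm σ) (r : ℕ → ℕ) : (t.renV r).obsSyms = t.obsSyms := by
  induction t generalizing r <;> simp [renV, obsSyms, *]

theorem mem_atoms_ups {a : Atom} {ρ : ℕ → Tm σ} {n : ℕ}
    (h : a ∈ (ups ρ n).atoms) : ∃ m, a ∈ (ρ m).atoms := by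
  cases n with
  | zero => simp [ups, atoms] at h
  | succ m => rw [ups, atoms_renV] at h; exact ⟨m, h⟩

theorem mem_atoms_subst {a : Atom} :
    ∀ (t : Tm σ) (ρ : ℕ → Tm σ), a ∈ (t.subst ρ).atoms →
      a ∈ t.atoms ∨ ∃ n, a ∈ (ρ n).atoms := by
  intro t
  induction t <;> intro ρ h <;>
    simp only [subst, atoms, Finset.mem_union, Finset.mem_singleton, Finset.mem_biUnion,
      Finset.mem_univ, true_and, Finset.notMem_empty] at h ⊢ <;>
    try tauto
  case pair ih₁ ih₂ =>
    rcases h with h | h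
    · rcases ih₁ _ h with h' | h' <;> tauto
    · rcases ih₂ _ h with h' | h' <;> tauto
  case con ih => rcases ih _ h with h' | h' <;> tauto
  case bindv ih₁ ih₂ =>
    rcases h with h | h
    · rcases ih₁ _ h with h' | h' <;> tauto
    · rcases ih₂ _ h with h' | h' <;> tauto
  case fst ih => rcases ih _ h with h' | h' <;> tauto
  case snd ih => rcases ih _ h with h' | h' <;> tauto
  case app ih₁ ih₂ =>
    rcases h with h | h
    · rcases ih₁ _ h with h' | h' <;> tauto
    · rcases ih₂ _ h with h' | h' <;> tauto
  case unbind ih => rcases ih _ h with h' | h' <;> tauto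
  case fn e ih =>
    rcases ih _ h with h' | ⟨m, h'⟩
    · exact Or.inl h'
    · rcases mem_atoms_ups h' with ⟨m', h''⟩
      rcases mem_atoms_ups h'' with ⟨m'', h''⟩
      exact Or.inr ⟨m'', h''⟩
  case lett e₁ e₂ ih₁ ih₂ =>
    rcases h with h | h
    · rcases ih₁ _ h with h' | h'
      · tauto
      · tauto
    · rcases ih₂ _ h with h' | ⟨m, h'⟩
      · tauto
      · rcases mem_atoms_ups h' with ⟨m', h''⟩; tauto
  case case t br iht ihbr =>
    rcases h with h | ⟨c, h⟩
    · rcases iht _ h with h' | h' <;> tauto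
    · rcases ihbr c _ h with h' | ⟨m, h'⟩
      · tauto
      · rcases mem_atoms_ups h' with ⟨m', h''⟩; tauto
  case obs o args ih =>
    rcases h with ⟨i, h⟩
    rcases ih i _ h with h' | h' <;> tauto

theorem mem_obsSyms_ups {o : σ.O} {ρ : ℕ → Tm σ} {n : ℕ}
    (h : o ∈ (ups ρ n).obsSyms) : ∃ m, o ∈ (ρ m).obsSyms := by
  cases n with
  | zero => simp [ups, obsSyms] at h
  | succ m => rw [ups, obsSyms_renV] at h; exact ⟨m, h⟩

theorem mem_obsSyms_subst {o : σ.O} :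
    ∀ (t : Tm σ) (ρ : ℕ → Tm σ), o ∈ (t.subst ρ).obsSyms →
      o ∈ t.obsSyms ∨ ∃ n, o ∈ (ρ n).obsSyms := by
  intro t
  induction t <;> intro ρ h <;>
    simp only [subst, obsSyms, Set.mem_union, Set.mem_iUnion, Set.mem_insert_iff,
      Set.mem_empty_iff_false] at h ⊢ <;>
    try tauto
  case pair ih₁ ih₂ =>
    rcases h with h | h
    · rcases ih₁ _ h with h' | h' <;> tauto
    · rcases ih₂ _ h with h' | h' <;> tauto
  case con ih => rcases ih _ h with h' | h' <;> tauto
  case bindv ih₁ ih₂ =>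
    rcases h with h | h
    · rcases ih₁ _ h with h' | h' <;> tauto
    · rcases ih₂ _ h with h' | h' <;> tauto
  case fst ih => rcases ih _ h with h' | h' <;> tauto
  case snd ih => rcases ih _ h with h' | h' <;> tauto
  case app ih₁ ih₂ =>
    rcases h with h | h
    · rcases ih₁ _ h with h' | h' <;> tauto
    · rcases ih₂ _ h with h' | h' <;> tauto
  case unbind ih => rcases ih _ h with h' | h' <;> tauto
  case fn e ih =>
    rcases ih _ h with h' | ⟨m, h'⟩
    · exact Or.inl h'
    · rcases mem_obsSyms_ups h' with ⟨m', h''⟩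
      rcases mem_obsSyms_ups h'' with ⟨m'', h''⟩
      exact Or.inr ⟨m'', h''⟩
  case lett e₁ e₂ ih₁ ih₂ =>
    rcases h with h | h
    · rcases ih₁ _ h with h' | h' <;> tauto
    · rcases ih₂ _ h with h' | ⟨m, h'⟩
      · tauto
      · rcases mem_obsSyms_ups h' with ⟨m', h''⟩; tauto
  case case t br iht ihbr =>
    rcases h with h | ⟨c, h⟩
    · rcases iht _ h with h' | h' <;> tauto
    · rcases ihbr c _ h with h' | ⟨m, h'⟩
      · tauto
      · rcases mem_obsSyms_ups h' with ⟨m', h''⟩; tauto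
  case obs o' args ih =>
    rcases h with h | ⟨i, h⟩
    · tauto
    · rcases ih i _ h with h' | h' <;> tauto

theorem atoms_subst1_subset (e v : Tm σ) : (e.subst1 v).atoms ⊆ e.atoms ∪ v.atoms := by
  intro a ha
  rcases mem_atoms_subst e _ ha with h | ⟨n, h⟩
  · exact Finset.mem_union_left _ h
  · match n with
    | 0 => exact Finset.mem_union_right _ h
    | n+1 => simp [cons1, atoms] at h

theorem atoms_subst2_subset (e v g : Tm σ) :
    (e.subst2 v g).atoms ⊆ e.atoms ∪ (v.atoms ∪ g.atoms) := by
  intro a ha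
  rcases mem_atoms_subst e _ ha with h | ⟨n, h⟩
  · exact Finset.mem_union_left _ h
  · match n with
    | 0 => exact Finset.mem_union_right _ (Finset.mem_union_left _ h)
    | 1 => exact Finset.mem_union_right _ (Finset.mem_union_right _ h)
    | n+2 => simp [cons2, atoms] at h

theorem obsSyms_subst1_subset (e v : Tm σ) :
    (e.subst1 v).obsSyms ⊆ e.obsSyms ∪ v.obsSyms := by
  intro o ho
  rcases mem_obsSyms_subst e _ ho with h | ⟨n, h⟩
  · exact Set.mem_union_left _ h
  · match n with
    | 0 => exact Set.mem_union_right _ h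
    | n+1 => simp [cons1, obsSyms] at h

theorem obsSyms_subst2_subset (e v g : Tm σ) :
    (e.subst2 v g).obsSyms ⊆ e.obsSyms ∪ (v.obsSyms ∪ g.obsSyms) := by
  intro o ho
  rcases mem_obsSyms_subst e _ ho with h | ⟨n, h⟩
  · exact Set.mem_union_left _ h
  · match n with
    | 0 => exact Set.mem_union_right _ (Set.mem_union_left _ h)
    | 1 => exact Set.mem_union_right _ (Set.mem_union_right _ h)
    | n+2 => simp [cons2, obsSyms] at h

theorem atoms_renameAtom_subset (v : Tm σ) (a a' : Atom) :
    (v.renameAtom a a').atoms ⊆ v.atoms ∪ {a'} := by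
  rw [renameAtom, atoms_mapAtoms]
  intro b hb
  simp only [Finset.mem_image] at hb
  obtain ⟨c, hc, rfl⟩ := hb
  by_cases h : c = a <;> simp [h, Finset.mem_union, hc]

theorem obsSyms_renameAtom (v : Tm σ) (a a' : Atom) :
    (v.renameAtom a a').obsSyms = v.obsSyms := obsSyms_mapAtoms v _

end Tm

theorem atoms_numeral {σ : Sig} (m : ℕ) : (numeral σ m).atoms = ∅ := by
  induction m <;> simp [numeral, Tm.atoms, *]

theorem obsSyms_numeral {σ : Sig} (m : ℕ) : (numeral σ m).obsSyms = ∅ := by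
  induction m <;> simp [numeral, Tm.obsSyms, *]

theorem mapAtoms_numeral {σ : Sig} (m : ℕ) (f : Atom → Atom) :
    (numeral σ m).mapAtoms f = numeral σ m := by
  induction m <;> simp [numeral, Tm.mapAtoms, *]

theorem Stk.mapAtoms_eq_self {σ : Sig} {f : Atom → Atom} :
    ∀ {S : Stk σ}, (∀ a ∈ S.atoms, f a = a) → S.mapAtoms f = S := by
  intro S
  induction S with
  | id => intro _; rfl
  | cons S e ih =>
    intro h
    simp only [Stk.atoms, Finset.mem_union] at h
    simp only [Stk.mapAtoms]
    rw [ih (fun a ha => h a (Or.inl ha)), Tm.mapAtoms_eq_self (fun a ha => h a (Or.inr ha))]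

theorem list_map_eq_self {f : Atom → Atom} :
    ∀ {l : List Atom}, (∀ a ∈ l, f a = a) → l.map f = l := by
  intro l; induction l <;> intro h <;> simp_all

theorem Step.nodup' {σ : Sig} {c c' : Config σ} (h : Step σ c c') (hnd : c.st.Nodup) :
    c'.st.Nodup := by
  cases h <;> simp_all [List.nodup_append] <;> exact fun b hb hh => by subst hh; contradiction

theorem Step.equivariant' {σ : Sig} (hequiv : ObsEquivariant σ) (π : Equiv.Perm Atom)
    (hπ : {a : Atom | π a ≠ a}.Finite) {c c' : Config σ} (hnd : c.st.Nodup)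
    (h : Step σ c c') :
    Step σ ⟨c.st.map π, c.stk.mapAtoms π, c.tm.mapAtoms π⟩
           ⟨c'.st.map π, c'.stk.mapAtoms π, c'.tm.mapAtoms π⟩ := by
  have hinj : Function.Injective (⇑π) := π.injective
  cases h with
  | pop hv =>
    simp only [Stk.mapAtoms, Tm.mapAtoms_subst1]
    exact .pop (Tm.isVal_mapAtoms hv _)
  | lett =>
    simp only [Tm.mapAtoms, Stk.mapAtoms]
    exact .lett
  | case br hv =>
    simp only [Tm.mapAtoms, Tm.mapAtoms_subst1]
    exact .case _ (Tm.isVal_mapAtoms hv _)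
  | fst hv₁ hv₂ =>
    simp only [Tm.mapAtoms]
    exact .fst (Tm.isVal_mapAtoms hv₁ _) (Tm.isVal_mapAtoms hv₂ _)
  | snd hv₁ hv₂ =>
    simp only [Tm.mapAtoms]
    exact .snd (Tm.isVal_mapAtoms hv₁ _) (Tm.isVal_mapAtoms hv₂ _)
  | app hv =>
    simp only [Tm.mapAtoms, Tm.mapAtoms_subst2]
    exact .app (Tm.isVal_mapAtoms hv _)
  | fresh hfr =>
    simp only [Tm.mapAtoms, List.map_append, List.map_cons, List.map_nil]
    refine .fresh ?_
    intro hmem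
    rcases List.mem_map.1 hmem with ⟨b, hb, hb'⟩
    exact hfr (hinj hb' ▸ hb)
  | unbind hfr hv =>
    simp only [Tm.mapAtoms, List.map_append, List.map_cons, List.map_nil,
      Tm.mapAtoms_renameAtom _ _ _ hinj]
    refine .unbind ?_ (Tm.isVal_mapAtoms hv _)
    intro hmem
    rcases List.mem_map.1 hmem with ⟨b, hb, hb'⟩
    exact hfr (hinj hb' ▸ hb)
  | obs o as hmem =>
    simp only [Tm.mapAtoms, mapAtoms_numeral]
    have heq := hequiv π hπ o _ (List.ofFn as) hnd (by simp) ?_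
    · rw [List.map_ofFn] at heq
      rw [heq]
      exact .obs o (fun i => π (as i)) (fun i => List.mem_map_of_mem (hmem i))
    · intro a ha
      rcases List.mem_ofFn.1 ha with ⟨i, rfl⟩
      exact hmem i

theorem TermN.equivariant' {σ : Sig} (hequiv : ObsEquivariant σ) (π : Equiv.Perm Atom)
    (hπ : {a : Atom | π a ≠ a}.Finite) {c : Config σ} {n : ℕ} (h : TermN σ c n) :
    c.st.Nodup → TermN σ ⟨c.st.map π, c.stk.mapAtoms π, c.tm.mapAtoms π⟩ n := by
  induction h with
  | val hv => intro _; exact .val (Tm.isVal_mapAtoms hv _)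
  | step hst _ ih =>
    intro hnd
    exact .step (Step.equivariant' hequiv π hπ hnd hst) (ih (hst.nodup' hnd))


theorem termN_swap {σ : Sig} (hequiv : ObsEquivariant σ) {s : List Atom} {S : Stk σ}
    {t : Tm σ} {n : ℕ} (hnd : s.Nodup) {a' b : Atom} (ha' : a' ∉ s) (hb : b ∉ s)
    (hS : S.atoms ⊆ s.toFinset) (h : TermN σ ⟨s ++ [a'], S, t⟩ n) :
    TermN σ ⟨s ++ [b], S, t.mapAtoms (⇑(Equiv.swap a' b))⟩ n := by
  by_cases hab : a' = b
  · subst hab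
    have ht : t.mapAtoms (⇑(Equiv.swap a' a')) = t := by
      rw [Equiv.swap_self]
      exact Tm.mapAtoms_eq_self (fun _ _ => rfl)
    rw [ht]; exact h
  · have hπfin : {x : Atom | Equiv.swap a' b x ≠ x}.Finite := by
      apply Set.Finite.subset ((Set.finite_singleton b).insert a')
      intro x hx
      by_contra hx'
      simp only [Set.mem_insert_iff, Set.mem_singleton_iff, not_or] at hx'
      exact hx (Equiv.swap_apply_of_ne_of_ne hx'.1 hx'.2)
    have hnd2 : (s ++ [a']).Nodup := by
      simp [List.nodup_append, hnd, ha']; exact fun x hx hh => ha' (hh ▸ hx)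
    have h2 := TermN.equivariant' hequiv (Equiv.swap a' b) hπfin h hnd2
    have e1 : (s ++ [a']).map (⇑(Equiv.swap a' b)) = s ++ [b] := by
      rw [List.map_append]
      congr 1
      · exact list_map_eq_self (fun x hx =>
          Equiv.swap_apply_of_ne_of_ne (fun hh => ha' (hh ▸ hx)) (fun hh => hb (hh ▸ hx)))
      · simp [Equiv.swap_apply_left]
    have e2 : S.mapAtoms (⇑(Equiv.swap a' b)) = S := by
      apply Stk.mapAtoms_eq_self
      intro x hx
      have hxs : x ∈ s := List.mem_toFinset.1 (hS hx)
      exact Equiv.swap_apply_of_ne_of_ne (fun hh => ha' (hh ▸ hxs)) (fun hh => hb (hh ▸ hxs))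
    simpa only [e1, e2] using h2

theorem affine_aux (σ : Sig) (hequiv : ObsEquivariant σ) :
    ∀ (n : ℕ) (s : List Atom) (S : Stk σ) (e : Tm σ) (a' : Atom),
      s.Nodup → a' ∉ s →
      S.atoms ∪ e.atoms ⊆ s.toFinset →
      (∀ o ∈ S.obsSyms ∪ e.obsSyms, AffineObs σ o) →
      (TermN σ ⟨a' :: s, S, e⟩ n ↔ TermN σ ⟨s, S, e⟩ n) := by
  intro n
  induction n with
  | zero =>
    intro s S e a' _ _ _ _
    constructor <;> intro h <;> cases h <;> exact .val ‹_›
  | succ n ih =>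
    intro s S e a' hnd ha' hat haff
    have IH : ∀ (S' : Stk σ) (e' : Tm σ),
        S'.atoms ∪ e'.atoms ⊆ s.toFinset →
        (S'.obsSyms ∪ e'.obsSyms ⊆ S.obsSyms ∪ e.obsSyms) →
        (TermN σ ⟨a' :: s, S', e'⟩ n ↔ TermN σ ⟨s, S', e'⟩ n) :=
      fun S' e' h1 h2 => ih s S' e' a' hnd ha' h1 (fun o ho => haff o (h2 ho))
    have IH2 : ∀ (b : Atom), b ∉ s → b ≠ a' → ∀ (S' : Stk σ) (e' : Tm σ),
        S'.atoms ∪ e'.atoms ⊆ (s ++ [b]).toFinset →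
        (S'.obsSyms ∪ e'.obsSyms ⊆ S.obsSyms ∪ e.obsSyms) →
        (TermN σ ⟨a' :: (s ++ [b]), S', e'⟩ n ↔ TermN σ ⟨s ++ [b], S', e'⟩ n) := by
      intro b hb hba S' e' h1 h2
      refine ih (s ++ [b]) S' e' a' ?_ ?_ h1 (fun o ho => haff o (h2 ho))
      · simp [List.nodup_append, hnd, hb]; exact fun x hx hh => hb (hh ▸ hx)
      · intro hmem
        rcases List.mem_append.1 hmem with h | h
        · exact ha' h
        · simp at h; exact hba h.symm
    constructor
    · -- forward direction
      intro h
      cases h with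
      | step hst ht =>
        cases hst with
        | pop hv =>
          rename_i S₀ e₀
          refine .step (.pop hv) ((IH S₀ _ ?_ ?_).mp ht)
          · intro x hx
            apply hat
            simp only [Stk.atoms, Finset.mem_union] at hx ⊢
            rcases hx with hx | hx
            · tauto
            · have := Tm.atoms_subst1_subset e₀ e hx
              simp only [Finset.mem_union] at this; tauto
          · intro o ho
            simp only [Stk.obsSyms, Set.mem_union] at ho ⊢
            rcases ho with ho | ho
            · tauto
            · have := Tm.obsSyms_subst1_subset e₀ e ho
              simp only [Set.mem_union] at this; tauto
        | lett =>
          rename_i e₁ e₂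
          refine .step .lett ((IH (.cons S e₂) e₁ ?_ ?_).mp ht)
          · intro x hx
            apply hat
            simp only [Stk.atoms, Tm.atoms, Finset.mem_union] at hx ⊢
            tauto
          · intro o ho
            simp only [Stk.obsSyms, Tm.obsSyms, Set.mem_union] at ho ⊢
            tauto
        | case br hv =>
          rename_i v c
          refine .step (.case br hv) ((IH S _ ?_ ?_).mp ht)
          · intro x hx
            apply hat
            simp only [Tm.atoms, Finset.mem_union] at hx ⊢
            rcases hx with hx | hx
            · tauto
            · have := Tm.atoms_subst1_subset (br c) v hx
              simp only [Finset.mem_union] at this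
              rcases this with h' | h'
              · exact Or.inr (Or.inr (Finset.mem_biUnion.2 ⟨c, Finset.mem_univ c, h'⟩))
              · tauto
          · intro o ho
            simp only [Tm.obsSyms, Set.mem_union, Set.mem_iUnion] at ho ⊢
            rcases ho with ho | ho
            · tauto
            · have := Tm.obsSyms_subst1_subset (br c) v ho
              simp only [Set.mem_union] at this
              rcases this with h' | h'
              · exact Or.inr (Or.inr ⟨c, h'⟩)
              · tauto
        | fst hv₁ hv₂ =>
          refine .step (.fst hv₁ hv₂) ((IH S _ ?_ ?_).mp ht)
          · intro x hx
            apply hat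
            simp only [Tm.atoms, Finset.mem_union] at hx ⊢
            tauto
          · intro o ho
            simp only [Tm.obsSyms, Set.mem_union] at ho ⊢
            tauto
        | snd hv₁ hv₂ =>
          refine .step (.snd hv₁ hv₂) ((IH S _ ?_ ?_).mp ht)
          · intro x hx
            apply hat
            simp only [Tm.atoms, Finset.mem_union] at hx ⊢
            tauto
          · intro o ho
            simp only [Tm.obsSyms, Set.mem_union] at ho ⊢
            tauto
        | app hv =>
          rename_i v e₀
          refine .step (.app hv) ((IH S _ ?_ ?_).mp ht)
          · intro x hx
            apply hat
            simp only [Tm.atoms, Finset.mem_union] at hx ⊢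
            rcases hx with hx | hx
            · tauto
            · have := Tm.atoms_subst2_subset e₀ v (.fn e₀) hx
              simp only [Finset.mem_union, Tm.atoms] at this; tauto
          · intro o ho
            simp only [Tm.obsSyms, Set.mem_union] at ho ⊢
            rcases ho with ho | ho
            · tauto
            · have := Tm.obsSyms_subst2_subset e₀ v (.fn e₀) ho
              simp only [Set.mem_union, Tm.obsSyms] at this; tauto
        | fresh hfr =>
          rename_i a''
          have ha''s : a'' ∉ s := fun hh => hfr (List.mem_cons_of_mem _ hh)
          have ha''a' : a'' ≠ a' := fun hh => hfr (hh ▸ List.mem_cons_self)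
          refine .step (.fresh ha''s) ((IH2 a'' ha''s ha''a' S (.atom a'') ?_ ?_).mp ht)
          · intro x hx
            simp only [Tm.atoms, Finset.mem_union, Finset.mem_singleton,
              List.toFinset_append, List.mem_toFinset] at hx ⊢
            rcases hx with hx | hx
            · exact Or.inl (List.mem_toFinset.1 (hat (Finset.mem_union_left _ hx)))
            · simp [hx]
          · intro o ho
            simp only [Tm.obsSyms, Set.mem_union, Set.mem_empty_iff_false, or_false] at ho ⊢
            tauto
        | unbind hfr hv =>
          rename_i a'' v a
          have ha''s : a'' ∉ s := fun hh => hfr (List.mem_cons_of_mem _ hh)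
          have ha''a' : a'' ≠ a' := fun hh => hfr (hh ▸ List.mem_cons_self)
          refine .step (.unbind ha''s hv) ((IH2 a'' ha''s ha''a' S _ ?_ ?_).mp ht)
          · intro x hx
            simp only [Tm.atoms, Finset.mem_union, Finset.mem_singleton,
              List.toFinset_append, List.mem_toFinset] at hx ⊢
            rcases hx with hx | hx | hx
            · exact Or.inl (List.mem_toFinset.1 (hat (Finset.mem_union_left _ hx)))
            · simp [hx]
            · have := Tm.atoms_renameAtom_subset v a a'' hx
              simp only [Finset.mem_union, Finset.mem_singleton] at this
              rcases this with h' | h'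
              · refine Or.inl (List.mem_toFinset.1 (hat (Finset.mem_union_right _ ?_)))
                simp only [Tm.atoms, Finset.mem_union]
                tauto
              · simp [h']
          · intro o ho
            simp only [Tm.obsSyms, Tm.obsSyms_renameAtom, Set.mem_union,
              Set.mem_empty_iff_false, or_false, false_or] at ho ⊢
            tauto
        | obs o as hmem =>
          have hmem' : ∀ i, as i ∈ s := by
            intro i
            refine List.mem_toFinset.1 (hat (Finset.mem_union_right _ ?_))
            exact Finset.mem_biUnion.2 ⟨i, Finset.mem_univ i, by simp [Tm.atoms]⟩
          have haffo : AffineObs σ o :=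
            haff o (Set.mem_union_right _ (Set.mem_insert o _))
          have hval : σ.obsVal o (a' :: s) (List.ofFn as) = σ.obsVal o s (List.ofFn as) := by
            refine haffo s a' (List.ofFn as) hnd ha' (by simp) ?_
            intro x hx
            rcases List.mem_ofFn.1 hx with ⟨i, rfl⟩
            exact hmem' i
          refine .step (.obs o as hmem') ((IH S _ ?_ ?_).mp (hval ▸ ht))
          · intro x hx
            simp only [atoms_numeral, Finset.union_empty] at hx
            exact hat (Finset.mem_union_left _ hx)
          · intro o' ho'
            simp only [obsSyms_numeral, Set.union_empty] at ho'
            exact Set.mem_union_left _ ho'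
    · -- backward direction
      intro h
      cases h with
      | step hst ht =>
        cases hst with
        | pop hv =>
          rename_i S₀ e₀
          refine .step (.pop hv) ((IH S₀ _ ?_ ?_).mpr ht)
          · intro x hx
            apply hat
            simp only [Stk.atoms, Finset.mem_union] at hx ⊢
            rcases hx with hx | hx
            · tauto
            · have := Tm.atoms_subst1_subset e₀ e hx
              simp only [Finset.mem_union] at this; tauto
          · intro o ho
            simp only [Stk.obsSyms, Set.mem_union] at ho ⊢
            rcases ho with ho | ho
            · tauto
            · have := Tm.obsSyms_subst1_subset e₀ e ho
              simp only [Set.mem_union] at this; tauto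
        | lett =>
          rename_i e₁ e₂
          refine .step .lett ((IH (.cons S e₂) e₁ ?_ ?_).mpr ht)
          · intro x hx
            apply hat
            simp only [Stk.atoms, Tm.atoms, Finset.mem_union] at hx ⊢
            tauto
          · intro o ho
            simp only [Stk.obsSyms, Tm.obsSyms, Set.mem_union] at ho ⊢
            tauto
        | case br hv =>
          rename_i v c
          refine .step (.case br hv) ((IH S _ ?_ ?_).mpr ht)
          · intro x hx
            apply hat
            simp only [Tm.atoms, Finset.mem_union] at hx ⊢
            rcases hx with hx | hx
            · tauto
            · have := Tm.atoms_subst1_subset (br c) v hx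
              simp only [Finset.mem_union] at this
              rcases this with h' | h'
              · exact Or.inr (Or.inr (Finset.mem_biUnion.2 ⟨c, Finset.mem_univ c, h'⟩))
              · tauto
          · intro o ho
            simp only [Tm.obsSyms, Set.mem_union, Set.mem_iUnion] at ho ⊢
            rcases ho with ho | ho
            · tauto
            · have := Tm.obsSyms_subst1_subset (br c) v ho
              simp only [Set.mem_union] at this
              rcases this with h' | h'
              · exact Or.inr (Or.inr ⟨c, h'⟩)
              · tauto
        | fst hv₁ hv₂ =>
          refine .step (.fst hv₁ hv₂) ((IH S _ ?_ ?_).mpr ht)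
          · intro x hx
            apply hat
            simp only [Tm.atoms, Finset.mem_union] at hx ⊢
            tauto
          · intro o ho
            simp only [Tm.obsSyms, Set.mem_union] at ho ⊢
            tauto
        | snd hv₁ hv₂ =>
          refine .step (.snd hv₁ hv₂) ((IH S _ ?_ ?_).mpr ht)
          · intro x hx
            apply hat
            simp only [Tm.atoms, Finset.mem_union] at hx ⊢
            tauto
          · intro o ho
            simp only [Tm.obsSyms, Set.mem_union] at ho ⊢
            tauto
        | app hv =>
          rename_i v e₀
          refine .step (.app hv) ((IH S _ ?_ ?_).mpr ht)
          · intro x hx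
            apply hat
            simp only [Tm.atoms, Finset.mem_union] at hx ⊢
            rcases hx with hx | hx
            · tauto
            · have := Tm.atoms_subst2_subset e₀ v (.fn e₀) hx
              simp only [Finset.mem_union, Tm.atoms] at this; tauto
          · intro o ho
            simp only [Tm.obsSyms, Set.mem_union] at ho ⊢
            rcases ho with ho | ho
            · tauto
            · have := Tm.obsSyms_subst2_subset e₀ v (.fn e₀) ho
              simp only [Set.mem_union, Tm.obsSyms] at this; tauto
        | fresh hfr =>
          rename_i a''
          have hS : S.atoms ⊆ s.toFinset := fun x hx => hat (Finset.mem_union_left _ hx)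
          have hobs : ∀ (b : Atom),
              (Stk.obsSyms S ∪ (Tm.atom (σ := σ) b).obsSyms ⊆
                S.obsSyms ∪ (Tm.fresh (σ := σ)).obsSyms) := by
            intro b o ho
            simp only [Tm.obsSyms, Set.mem_union, Set.mem_empty_iff_false, or_false] at ho ⊢
            tauto
          have hatm : ∀ (b : Atom), b ∉ s →
              Stk.atoms S ∪ (Tm.atom (σ := σ) b).atoms ⊆ (s ++ [b]).toFinset := by
            intro b _ x hx
            simp only [Tm.atoms, Finset.mem_union, Finset.mem_singleton,
              List.toFinset_append, List.mem_toFinset] at hx ⊢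
            rcases hx with hx | hx
            · exact Or.inl (List.mem_toFinset.1 (hS hx))
            · simp [hx]
          by_cases hcase : a'' = a'
          · subst hcase
            obtain ⟨b, hb⟩ := Infinite.exists_notMem_finset (insert a'' s.toFinset)
            have hbs : b ∉ s := fun hh => hb (Finset.mem_insert_of_mem (List.mem_toFinset.2 hh))
            have hba : b ≠ a'' := fun hh => hb (hh ▸ Finset.mem_insert_self _ _)
            have ht2 := termN_swap hequiv hnd hfr hbs hS ht
            have hterm : (Tm.atom (σ := σ) a'').mapAtoms (⇑(Equiv.swap a'' b)) = Tm.atom b := by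
              simp [Tm.mapAtoms]
            rw [hterm] at ht2
            refine .step (.fresh (show b ∉ a'' :: s by simp [hbs, hba])) ?_
            exact (IH2 b hbs hba S (.atom b) (hatm b hbs) (hobs b)).mpr ht2
          · refine .step (.fresh (show a'' ∉ a' :: s by simp [hfr, hcase])) ?_
            exact (IH2 a'' hfr hcase S (.atom a'') (hatm a'' hfr) (hobs a'')).mpr ht
        | unbind hfr hv =>
          rename_i a'' v a
          have hS : S.atoms ⊆ s.toFinset := fun x hx => hat (Finset.mem_union_left _ hx)
          have hva : v.atoms ⊆ s.toFinset := by
            intro x hx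
            refine hat (Finset.mem_union_right _ ?_)
            simp only [Tm.atoms, Finset.mem_union]
            tauto
          have has : a ∈ s := by
            refine List.mem_toFinset.1 (hat (Finset.mem_union_right _ ?_))
            simp [Tm.atoms]
          have hobs : ∀ (b : Atom),
              (Stk.obsSyms S ∪ (Tm.pair (.atom b) (v.renameAtom a b)).obsSyms ⊆
                S.obsSyms ∪ (Tm.unbind (σ := σ) (.bindv (.atom a) v)).obsSyms) := by
            intro b o ho
            simp only [Tm.obsSyms, Tm.obsSyms_renameAtom, Set.mem_union,
              Set.mem_empty_iff_false, or_false, false_or] at ho ⊢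
            tauto
          have hatm : ∀ (b : Atom), b ∉ s →
              Stk.atoms S ∪ (Tm.pair (.atom b) (v.renameAtom a b)).atoms ⊆
                (s ++ [b]).toFinset := by
            intro b _ x hx
            simp only [Tm.atoms, Finset.mem_union, Finset.mem_singleton,
              List.toFinset_append, List.mem_toFinset] at hx ⊢
            rcases hx with hx | hx | hx
            · exact Or.inl (List.mem_toFinset.1 (hS hx))
            · simp [hx]
            · have := Tm.atoms_renameAtom_subset v a b hx
              simp only [Finset.mem_union, Finset.mem_singleton] at this
              rcases this with h' | h'
              · exact Or.inl (List.mem_toFinset.1 (hva h'))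
              · simp [h']
          by_cases hcase : a'' = a'
          · subst hcase
            obtain ⟨b, hb⟩ := Infinite.exists_notMem_finset (insert a'' s.toFinset)
            have hbs : b ∉ s := fun hh => hb (Finset.mem_insert_of_mem (List.mem_toFinset.2 hh))
            have hba : b ≠ a'' := fun hh => hb (hh ▸ Finset.mem_insert_self _ _)
            have ht2 := termN_swap hequiv hnd hfr hbs hS ht
            have hswap_a : Equiv.swap a'' b a = a :=
              Equiv.swap_apply_of_ne_of_ne (fun hh => hfr (hh ▸ has)) (fun hh => hbs (hh ▸ has))
            have hmapv : v.mapAtoms (⇑(Equiv.swap a'' b)) = v := by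
              apply Tm.mapAtoms_eq_self
              intro x hx
              have hxs : x ∈ s := List.mem_toFinset.1 (hva hx)
              exact Equiv.swap_apply_of_ne_of_ne
                (fun hh => hfr (hh ▸ hxs)) (fun hh => hbs (hh ▸ hxs))
            have hterm : (Tm.pair (.atom a'') (v.renameAtom a a'')).mapAtoms
                (⇑(Equiv.swap a'' b)) = Tm.pair (.atom b) (v.renameAtom a b) := by
              simp only [Tm.mapAtoms,
                Tm.mapAtoms_renameAtom _ _ _ (Equiv.swap a'' b).injective,
                hmapv, hswap_a, Equiv.swap_apply_left]
            rw [hterm] at ht2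
            refine .step (.unbind (show b ∉ a'' :: s by simp [hbs, hba]) hv) ?_
            exact (IH2 b hbs hba S _ (hatm b hbs) (hobs b)).mpr ht2
          · refine .step (.unbind (show a'' ∉ a' :: s by simp [hfr, hcase]) hv) ?_
            exact (IH2 a'' hfr hcase S _ (hatm a'' hfr) (hobs a'')).mpr ht
        | obs o as hmem =>
          have haffo : AffineObs σ o :=
            haff o (Set.mem_union_right _ (Set.mem_insert o _))
          have hval : σ.obsVal o (a' :: s) (List.ofFn as) = σ.obsVal o s (List.ofFn as) := by
            refine haffo s a' (List.ofFn as) hnd ha' (by simp) ?_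
            intro x hx
            rcases List.mem_ofFn.1 hx with ⟨i, rfl⟩
            exact hmem i
          refine .step (.obs o as (fun i => List.mem_cons_of_mem _ (hmem i))) ?_
          rw [hval]
          refine (IH S _ ?_ ?_).mpr ht
          · intro x hx
            simp only [atoms_numeral, Finset.union_empty] at hx
            exact hat (Finset.mem_union_left _ hx)
          · intro o' ho'
            simp only [obsSyms_numeral, Set.union_empty] at ho'
            exact Set.mem_union_left _ ho'

/-- Affine state extension. -/
theorem affine_state_extension (σ : Sig) (hequiv : ObsEquivariant σ)
    (S : Stk σ) (e : Tm σ)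
    (haff : ∀ o : σ.O, o ∈ S.obsSyms ∪ e.obsSyms → AffineObs σ o)
    (s : List Atom) (hnd : s.Nodup)
    (hat : S.atoms ∪ e.atoms ⊆ s.toFinset)
    (a' : Atom) (ha' : a' ∉ s) (n : ℕ) :
    TermN σ ⟨a' :: s, S, e⟩ n ↔ TermN σ ⟨s, S, e⟩ n :=
  affine_aux σ hequiv n s S e a' hnd ha' hat haff
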